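/- arXiv:2503.04091 — 4 statements merged into one kernel-verified Lean document; each statement's English description precedes it below -/
import Mathlib

section
/- Let W be a random variable and V a Bernoulli(1/2) random variable independent of nothing in particular (jointly distributed with W). Let g : 𝒲 × {0,1} → [-1,1] be measurable such that for an independent copy V' of V (independent of W) one has E_{V'}[g(w, V')] = 0 for every w. Then E[g(W, V)] ≤ inf_{t > 0} ( I(W; V) + t²/2 ) / t = √(2 I(W; V)). -/
open MeasureTheory Real
open scoped ENNReal NNReal


lemma my_inv_lintegral_le {α : Type*} [MeasurableSpace α] (q p : Measure α)
    [IsProbabilityMeasure q] [IsProbabilityMeasure p] (hqp : q ≪ p) :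
    ∫⁻ x, ENNReal.ofReal ((q.rnDeriv p x).toReal)⁻¹ ∂q ≤ 1 := by
  have h1 : ∫⁻ x, ENNReal.ofReal ((q.rnDeriv p x).toReal)⁻¹ ∂q
      = ∫⁻ x, (q.rnDeriv p x)⁻¹ ∂q := by
    refine lintegral_congr_ae ?_
    filter_upwards [Measure.rnDeriv_pos hqp, hqp.ae_le (Measure.rnDeriv_lt_top q p)]
      with x hpos hlt
    rw [← ENNReal.toReal_inv, ENNReal.ofReal_toReal]
    simp [hpos.ne']
  rw [h1, ← lintegral_rnDeriv_mul (f := fun x => (q.rnDeriv p x)⁻¹) hqp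
    (Measure.measurable_rnDeriv q p).inv.aemeasurable]
  calc ∫⁻ x, q.rnDeriv p x * (q.rnDeriv p x)⁻¹ ∂p
      ≤ ∫⁻ _, 1 ∂p := lintegral_mono fun x => ENNReal.mul_inv_le_one _
    _ = 1 := by simp

lemma my_gibbs {α : Type*} [MeasurableSpace α] (q p : Measure α)
    [IsProbabilityMeasure q] [IsProbabilityMeasure p] (hqp : q ≪ p)
    (hint : Integrable (llr q p) q) : 0 ≤ ∫ x, llr q p x ∂q := by
  set r : α → ℝ := fun x => ((q.rnDeriv p x).toReal)⁻¹ with hr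
  have hrmeas : Measurable r := (Measure.measurable_rnDeriv q p).ennreal_toReal.inv
  have hrnonneg : ∀ x, 0 ≤ r x := fun x => by positivity
  have hrint : Integrable r q := by
    refine ⟨hrmeas.aestronglyMeasurable, ?_⟩
    rw [hasFiniteIntegral_iff_ofReal (Filter.Eventually.of_forall hrnonneg)]
    exact (my_inv_lintegral_le q p hqp).trans_lt ENNReal.one_lt_top
  have hptwise : ∀ᵐ x ∂q, -llr q p x ≤ r x - 1 := by
    filter_upwards [Measure.rnDeriv_pos hqp, hqp.ae_le (Measure.rnDeriv_lt_top q p)]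
      with x hpos hlt
    have hx : 0 < (q.rnDeriv p x).toReal := ENNReal.toReal_pos hpos.ne' hlt.ne
    have : -llr q p x = Real.log (r x) := by
      rw [llr_def, ← Real.log_inv]
    rw [this]
    exact Real.log_le_sub_one_of_pos (by positivity)
  have h1 : ∫ x, -llr q p x ∂q ≤ ∫ x, (r x - 1) ∂q :=
    integral_mono_ae hint.neg (hrint.sub (integrable_const 1)) hptwise
  have h2 : ∫ x, (r x - 1) ∂q ≤ 0 := by
    rw [integral_sub hrint (integrable_const 1)]
    have : ∫ x, r x ∂q ≤ 1 := by
      rw [integral_eq_lintegral_of_nonneg_ae (Filter.Eventually.of_forall hrnonneg)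
        hrmeas.aestronglyMeasurable]
      have := ENNReal.toReal_mono (by simp) (my_inv_lintegral_le q p hqp)
      simpa using this
    simp only [integral_const, Measure.real, measure_univ, ENNReal.toReal_one, smul_eq_mul, one_mul]
    linarith
  rw [integral_neg] at h1
  linarith

lemma my_integrable_llr {α : Type*} [MeasurableSpace α] (q p : Measure α)
    [IsProbabilityMeasure q] [IsProbabilityMeasure p] (hqp : q ≪ p)
    (hle : q.rnDeriv p ≤ᵐ[p] 2) : Integrable (llr q p) q := by
  set G : α → ℝ≥0∞ := fun x => ENNReal.ofReal (max (-(llr q p x)) 0) with hG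
  have hGmeas : Measurable G :=
    ((measurable_llr q p).neg.max measurable_const).ennreal_ofReal
  have hGle : ∀ᵐ x ∂p, q.rnDeriv p x * G x ≤ 1 := by
    filter_upwards [Measure.rnDeriv_lt_top q p] with x hlt
    rcases eq_or_ne (q.rnDeriv p x) 0 with h0 | h0
    · simp [h0]
    · have hy : 0 < (q.rnDeriv p x).toReal := ENNReal.toReal_pos h0 hlt.ne
      have h1 : max (-(llr q p x)) 0 ≤ ((q.rnDeriv p x).toReal)⁻¹ := by
        simp only [llr_def]
        refine max_le ?_ (by positivity)
        rw [← Real.log_inv]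
        have := Real.log_le_sub_one_of_pos (inv_pos.2 hy)
        linarith
      have h2 : G x ≤ (q.rnDeriv p x)⁻¹ := by
        have heq : (q.rnDeriv p x)⁻¹ = ENNReal.ofReal ((q.rnDeriv p x).toReal)⁻¹ := by
          rw [← ENNReal.toReal_inv, ENNReal.ofReal_toReal (by simp [h0])]
        rw [hG, heq]
        exact ENNReal.ofReal_le_ofReal h1
      calc q.rnDeriv p x * G x ≤ q.rnDeriv p x * (q.rnDeriv p x)⁻¹ :=
            mul_le_mul_right h2 _
        _ ≤ 1 := ENNReal.mul_inv_le_one _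
  have hGint : ∫⁻ x, G x ∂q ≤ 1 := by
    rw [← lintegral_rnDeriv_mul hqp hGmeas.aemeasurable]
    calc ∫⁻ x, q.rnDeriv p x * G x ∂p ≤ ∫⁻ _, 1 ∂p := lintegral_mono_ae hGle
      _ = 1 := by simp
  refine ⟨(measurable_llr q p).aestronglyMeasurable, ?_⟩
  have hbound : ∀ᵐ x ∂q, (‖llr q p x‖₊ : ℝ≥0∞) ≤ ENNReal.ofReal (Real.log 2) + G x := by
    filter_upwards [Measure.rnDeriv_pos hqp, hqp.ae_le (Measure.rnDeriv_lt_top q p),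
      hqp.ae_le hle] with x hpos hlt hle2
    have hy : 0 < (q.rnDeriv p x).toReal := ENNReal.toReal_pos hpos.ne' hlt.ne
    have hy2 : (q.rnDeriv p x).toReal ≤ 2 := by
      calc (q.rnDeriv p x).toReal ≤ ((2:ℝ≥0∞)).toReal :=
        ENNReal.toReal_mono (by simp) hle2
        _ = 2 := by simp
    have habs : |llr q p x| ≤ Real.log 2 + max (-(llr q p x)) 0 := by
      simp only [llr_def]
      rcases le_or_gt 0 (Real.log (q.rnDeriv p x).toReal) with h | h
      · rw [abs_of_nonneg h]
        have hlog : Real.log (q.rnDeriv p x).toReal ≤ Real.log 2 :=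
          Real.log_le_log hy hy2
        have hmax : (0:ℝ) ≤ max (-(Real.log (q.rnDeriv p x).toReal)) 0 := le_max_right _ _
        linarith
      · rw [abs_of_neg h]
        have h2 : (0:ℝ) ≤ Real.log 2 := Real.log_nonneg one_le_two
        have h3 := le_max_left (-(Real.log (q.rnDeriv p x).toReal)) 0
        linarith
    rw [← enorm_eq_nnnorm, Real.enorm_eq_ofReal_abs]
    calc ENNReal.ofReal |llr q p x| ≤ ENNReal.ofReal (Real.log 2 + max (-(llr q p x)) 0) :=
          ENNReal.ofReal_le_ofReal habs
      _ = ENNReal.ofReal (Real.log 2) + G x := by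
          rw [ENNReal.ofReal_add (Real.log_nonneg one_le_two) (le_max_right _ _)]
  calc ∫⁻ x, (‖llr q p x‖₊ : ℝ≥0∞) ∂q
      ≤ ∫⁻ x, (ENNReal.ofReal (Real.log 2) + G x) ∂q := lintegral_mono_ae hbound
    _ = ENNReal.ofReal (Real.log 2) * q Set.univ + ∫⁻ x, G x ∂q := by
        rw [lintegral_add_left measurable_const, lintegral_const]
    _ ≤ ENNReal.ofReal (Real.log 2) + 1 := by
        rw [measure_univ, mul_one]; exact add_le_add_right hGint _
    _ < ⊤ := by finiteness

lemma my_dv {α : Type*} [MeasurableSpace α] (q p : Measure α)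
    [IsProbabilityMeasure q] [IsProbabilityMeasure p] (hqp : q ≪ p)
    (f : α → ℝ) (hfq : Integrable f q) (hexp : Integrable (fun x => exp (f x)) p)
    (hint : Integrable (llr q p) q) :
    ∫ x, f x ∂q ≤ ∫ x, llr q p x ∂q + Real.log (∫ x, exp (f x) ∂p) := by
  haveI : IsProbabilityMeasure (p.tilted f) := isProbabilityMeasure_tilted hexp
  have hqν : q ≪ p.tilted f := hqp.trans (absolutelyContinuous_tilted hexp)
  have hgibbs := my_gibbs q (p.tilted f) hqν
    (integrable_llr_tilted_right hqp hfq hint hexp)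
  rw [integral_llr_tilted_right hqp hfq hexp hint] at hgibbs
  linarith

/-- KL divergence (assuming absolute continuity / finiteness, as the expected
log-likelihood ratio). -/
noncomputable def klDiv {α : Type*} [MeasurableSpace α] (Q P : Measure α) : ℝ :=
  ∫ x, llr Q P x ∂Q

/-- Mutual information between two random variables: KL divergence between the
joint law and the product of the marginal laws. -/
noncomputable def mutualInfo {Ω α β : Type*} [MeasurableSpace Ω]
    [MeasurableSpace α] [MeasurableSpace β]
    (μ : Measure Ω) (X : Ω → α) (Y : Ω → β) : ℝ :=
  klDiv (μ.map fun ω => (X ω, Y ω)) ((μ.map X).prod (μ.map Y))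

theorem dv_hoeffding_mutualInfo_bound {Ω 𝒲 : Type*} [MeasureSpace Ω]
    [IsProbabilityMeasure (volume : Measure Ω)] [MeasurableSpace 𝒲]
    (W : Ω → 𝒲) (hW : Measurable W)
    (V : Ω → Bool) (hV : Measurable V)
    (hBern : volume (V ⁻¹' {true}) = 1 / 2)
    (g : 𝒲 → Bool → ℝ) (hg : Measurable fun p : 𝒲 × Bool => g p.1 p.2)
    (hbdd : ∀ w v, g w v ∈ Set.Icc (-1 : ℝ) 1)
    (hzero : ∀ w, g w false + g w true = 0) :
    (∀ t : ℝ, 0 < t →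
      ∫ ω, g (W ω) (V ω) ≤ (mutualInfo volume W V + t ^ 2 / 2) / t) ∧
    ∫ ω, g (W ω) (V ω) ≤ Real.sqrt (2 * mutualInfo volume W V) := by
  set μ : Measure Ω := volume with hμdef
  set μW := μ.map W with hμW
  set μV := μ.map V with hμVdef
  set Q := μ.map (fun ω => (W ω, V ω)) with hQ
  set P := μW.prod μV with hP
  haveI : IsProbabilityMeasure μW := Measure.isProbabilityMeasure_map hW.aemeasurable
  haveI : IsProbabilityMeasure μV := Measure.isProbabilityMeasure_map hV.aemeasurable
  haveI : IsProbabilityMeasure Q := Measure.isProbabilityMeasure_map (hW.prodMk hV).aemeasurable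
  haveI : IsProbabilityMeasure P := by rw [hP]; infer_instance
  -- marginal of V
  have hVt : μV {true} = 1/2 := by
    rw [hμVdef, Measure.map_apply hV (measurableSet_singleton _)]; exact hBern
  have hVf : μV {false} = 1/2 := by
    have hcompl : ({true}ᶜ : Set Bool) = {false} := by ext b; cases b <;> simp
    have h := measure_compl (μ := μV) (measurableSet_singleton true) (measure_ne_top _ _)
    rw [hcompl, hVt, measure_univ] at h
    rw [h, ENNReal.sub_half ENNReal.one_ne_top]
  -- Q ≤ 2 P
  have hQle : Q ≤ (2 : ℝ≥0∞) • P := by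
    refine Measure.le_iff.2 fun s hs => ?_
    have hSf : MeasurableSet {w : 𝒲 | (w, false) ∈ s} :=
      (measurable_id.prodMk measurable_const) hs
    have hSt : MeasurableSet {w : 𝒲 | (w, true) ∈ s} :=
      (measurable_id.prodMk measurable_const) hs
    have hQs : Q s ≤ μW {w | (w, false) ∈ s} + μW {w | (w, true) ∈ s} := by
      rw [hQ, Measure.map_apply (hW.prodMk hV) hs]
      have hsub : (fun ω => (W ω, V ω)) ⁻¹' s ⊆
          (W ⁻¹' {w | (w, false) ∈ s}) ∪ (W ⁻¹' {w | (w, true) ∈ s}) := by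
        intro ω hω
        cases h : V ω
        · left; simpa [h] using (show (W ω, V ω) ∈ s from hω)
        · right; simpa [h] using (show (W ω, V ω) ∈ s from hω)
      calc μ ((fun ω => (W ω, V ω)) ⁻¹' s)
          ≤ μ ((W ⁻¹' {w | (w, false) ∈ s}) ∪ (W ⁻¹' {w | (w, true) ∈ s})) :=
            measure_mono hsub
        _ ≤ μ (W ⁻¹' {w | (w, false) ∈ s}) + μ (W ⁻¹' {w | (w, true) ∈ s}) :=
            measure_union_le _ _
        _ = μW {w | (w, false) ∈ s} + μW {w | (w, true) ∈ s} := by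
            rw [hμW, Measure.map_apply hW hSf, Measure.map_apply hW hSt]
    have hPs : 2⁻¹ * (μW {w | (w, false) ∈ s} + μW {w | (w, true) ∈ s}) ≤ P s := by
      rw [hP, Measure.prod_apply hs]
      have hpt : ∀ w : 𝒲,
          2⁻¹ * (({w | (w, false) ∈ s} : Set 𝒲).indicator (1 : 𝒲 → ℝ≥0∞) w
            + ({w | (w, true) ∈ s} : Set 𝒲).indicator (1 : 𝒲 → ℝ≥0∞) w)
          ≤ μV (Prod.mk w ⁻¹' s) := by
        intro w
        by_cases hf : (w, false) ∈ s <;> by_cases ht : (w, true) ∈ s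
        · have huniv : (Prod.mk w ⁻¹' s) = Set.univ := by
            ext b; cases b <;> simp [hf, ht]
          rw [huniv, measure_univ]
          have e1 : ({w | (w, false) ∈ s} : Set 𝒲).indicator (1 : 𝒲 → ℝ≥0∞) w = 1 :=
            Set.indicator_of_mem (by exact hf) _
          have e2 : ({w | (w, true) ∈ s} : Set 𝒲).indicator (1 : 𝒲 → ℝ≥0∞) w = 1 :=
            Set.indicator_of_mem (by exact ht) _
          rw [e1, e2, one_add_one_eq_two, ENNReal.inv_mul_cancel two_ne_zero
            ENNReal.ofNat_ne_top]
        · have hsubv : ({false} : Set Bool) ⊆ Prod.mk w ⁻¹' s := by simp [hf]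
          have e1 : ({w | (w, false) ∈ s} : Set 𝒲).indicator (1 : 𝒲 → ℝ≥0∞) w = 1 :=
            Set.indicator_of_mem (by exact hf) _
          have e2 : ({w | (w, true) ∈ s} : Set 𝒲).indicator (1 : 𝒲 → ℝ≥0∞) w = 0 :=
            Set.indicator_of_notMem (by exact ht) _
          calc 2⁻¹ * _ = 2⁻¹ * (1 + 0 : ℝ≥0∞) := by rw [e1, e2]
            _ = 1/2 := by norm_num
            _ = μV {false} := hVf.symm
            _ ≤ μV (Prod.mk w ⁻¹' s) := measure_mono hsubv
        · have hsubv : ({true} : Set Bool) ⊆ Prod.mk w ⁻¹' s := by simp [ht]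
          have e1 : ({w | (w, false) ∈ s} : Set 𝒲).indicator (1 : 𝒲 → ℝ≥0∞) w = 0 :=
            Set.indicator_of_notMem (by exact hf) _
          have e2 : ({w | (w, true) ∈ s} : Set 𝒲).indicator (1 : 𝒲 → ℝ≥0∞) w = 1 :=
            Set.indicator_of_mem (by exact ht) _
          calc 2⁻¹ * _ = 2⁻¹ * (0 + 1 : ℝ≥0∞) := by rw [e1, e2]
            _ = 1/2 := by norm_num
            _ = μV {true} := hVt.symm
            _ ≤ μV (Prod.mk w ⁻¹' s) := measure_mono hsubv
        · have e1 : ({w | (w, false) ∈ s} : Set 𝒲).indicator (1 : 𝒲 → ℝ≥0∞) w = 0 :=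
            Set.indicator_of_notMem (by exact hf) _
          have e2 : ({w | (w, true) ∈ s} : Set 𝒲).indicator (1 : 𝒲 → ℝ≥0∞) w = 0 :=
            Set.indicator_of_notMem (by exact ht) _
          rw [e1, e2]; simp
      calc 2⁻¹ * (μW {w | (w, false) ∈ s} + μW {w | (w, true) ∈ s})
          = ∫⁻ w, 2⁻¹ * (({w | (w, false) ∈ s} : Set 𝒲).indicator 1 w
              + ({w | (w, true) ∈ s} : Set 𝒲).indicator 1 w) ∂μW := by
            rw [lintegral_const_mul _ (f := fun w => ({w | (w, false) ∈ s} : Set 𝒲).indicator 1 w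
              + ({w | (w, true) ∈ s} : Set 𝒲).indicator 1 w) ((measurable_one.indicator hSf).add
              (measurable_one.indicator hSt)),
              lintegral_add_left (measurable_one.indicator hSf),
              lintegral_indicator_one hSf, lintegral_indicator_one hSt]
        _ ≤ ∫⁻ w, μV (Prod.mk w ⁻¹' s) ∂μW := lintegral_mono hpt
    calc Q s ≤ μW {w | (w, false) ∈ s} + μW {w | (w, true) ∈ s} := hQs
      _ = 2 * (2⁻¹ * (μW {w | (w, false) ∈ s} + μW {w | (w, true) ∈ s})) := by
          rw [← mul_assoc, ENNReal.mul_inv_cancel two_ne_zero ENNReal.ofNat_ne_top, one_mul]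
      _ ≤ 2 * P s := mul_le_mul_right hPs 2
      _ = ((2 : ℝ≥0∞) • P) s := by simp
  have hac : Q ≪ P := Measure.absolutelyContinuous_of_le_smul hQle
  -- rnDeriv bound
  have hrnle : Q.rnDeriv P ≤ᵐ[P] 2 := by
    haveI : IsFiniteMeasure ((2 : ℝ≥0∞) • P) := by
      constructor
      rw [Measure.smul_apply, measure_univ]
      simp [ENNReal.ofNat_lt_top]
    have h10 : Q.rnDeriv ((2 : ℝ≥0∞) • P) ≤ᵐ[(2 : ℝ≥0∞) • P] 1 :=
      Measure.rnDeriv_le_one_of_le hQle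
    have h1 : Q.rnDeriv ((2 : ℝ≥0∞) • P) ≤ᵐ[P] 1 := by
      rw [Filter.EventuallyLE, ae_iff] at h10 ⊢
      rw [Measure.smul_apply] at h10
      simpa [smul_eq_mul, mul_eq_zero] using h10
    have h2 := Measure.rnDeriv_smul_right_of_ne_top Q P (r := 2) two_ne_zero
      ENNReal.ofNat_ne_top
    filter_upwards [h1, h2] with x hx1 hx2
    have hx1' : 2⁻¹ * Q.rnDeriv P x ≤ 1 := by
      rw [hx2] at hx1; simpa using hx1
    calc Q.rnDeriv P x = 2 * (2⁻¹ * Q.rnDeriv P x) := by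
          rw [← mul_assoc, ENNReal.mul_inv_cancel two_ne_zero ENNReal.ofNat_ne_top, one_mul]
      _ ≤ 2 * 1 := mul_le_mul_right hx1' 2
      _ = 2 := mul_one 2
  have h_int : Integrable (llr Q P) Q := my_integrable_llr Q P hac hrnle
  set I := klDiv Q P with hI
  have hI0 : 0 ≤ I := my_gibbs Q P hac h_int
  have hg1 : ∀ w v, |g w v| ≤ 1 := fun w v => abs_le.2 ⟨(hbdd w v).1, (hbdd w v).2⟩
  -- key estimate: ∀ t > 0, t * E ≤ I + t^2/2
  have hkey : ∀ t : ℝ, 0 < t → t * (∫ ω, g (W ω) (V ω) ∂μ) ≤ I + t ^ 2 / 2 := by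
    intro t ht
    set f : 𝒲 × Bool → ℝ := fun p => t * g p.1 p.2 with hf
    have hfmeas : Measurable f := hg.const_mul t
    have hfQ : Integrable f Q := by
      refine (integrable_const (|t|)).mono' hfmeas.aestronglyMeasurable ?_
      refine Filter.Eventually.of_forall fun p => ?_
      rw [hf, Real.norm_eq_abs, abs_mul]
      calc |t| * |g p.1 p.2| ≤ |t| * 1 := by
            have := hg1 p.1 p.2; nlinarith [abs_nonneg t]
        _ = |t| := mul_one _
    have hexpb : ∀ p : 𝒲 × Bool, exp (f p) ≤ exp |t| := by
      intro p
      refine Real.exp_le_exp.2 ?_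
      rw [hf]
      calc t * g p.1 p.2 ≤ |t * g p.1 p.2| := le_abs_self _
        _ = |t| * |g p.1 p.2| := abs_mul _ _
        _ ≤ |t| * 1 := by have := hg1 p.1 p.2; nlinarith [abs_nonneg t]
        _ = |t| := mul_one _
    have hexp : Integrable (fun p => exp (f p)) P := by
      refine (integrable_const (exp |t|)).mono'
        (Real.measurable_exp.comp hfmeas).aestronglyMeasurable ?_
      exact Filter.Eventually.of_forall fun p => by
        rw [Real.norm_eq_abs, abs_of_pos (exp_pos _)]; exact hexpb p
    have hDV := my_dv Q P hac f hfQ hexp h_int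
    have hEQ : ∫ p, f p ∂Q = t * ∫ ω, g (W ω) (V ω) ∂μ := by
      rw [hQ, integral_map (hW.prodMk hV).aemeasurable hfmeas.aestronglyMeasurable]
      simp only [hf]
      rw [integral_const_mul]
    -- mgf bound
    have hmgf : ∫ p, exp (f p) ∂P ≤ exp (t ^ 2 / 2) := by
      rw [hP, integral_prod _ hexp]
      have hinner : ∀ w : 𝒲, ∫ v, exp (f (w, v)) ∂μV ≤ exp (t ^ 2 / 2) := by
        intro w
        have hint : Integrable (fun v => exp (f (w, v))) μV := by
          refine (integrable_const (exp |t|)).mono'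
            ((Real.measurable_exp.comp (hfmeas.comp (measurable_const.prodMk
              measurable_id))).aestronglyMeasurable) ?_
          exact Filter.Eventually.of_forall fun v => by
            rw [Real.norm_eq_abs, abs_of_pos (exp_pos _)]; exact hexpb (w, v)
        rw [integral_fintype hint]
        have ha : g w true = -g w false := by have := hzero w; linarith
        have hsum : ∑ v : Bool, (μV {v}).toReal • exp (f (w, v))
            = (exp (t * g w false) + exp (-(t * g w false))) / 2 := by
          rw [Fintype.sum_bool, hVt, hVf]
          simp only [hf, ha, smul_eq_mul, mul_neg]
          rw [show ((1:ℝ≥0∞)/2).toReal = (1/2 : ℝ) from by simp]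
          ring
        erw [hsum, ← Real.cosh_eq]
        have ha2 : (g w false) ^ 2 ≤ 1 := by
          have := abs_le.1 (hg1 w false); nlinarith
        calc Real.cosh (t * g w false) ≤ exp ((t * g w false) ^ 2 / 2) :=
              Real.cosh_le_exp_half_sq _
          _ ≤ exp (t ^ 2 / 2) := by
              refine Real.exp_le_exp.2 ?_
              rw [mul_pow]
              nlinarith [sq_nonneg t]
      calc ∫ w, ∫ v, exp (f (w, v)) ∂μV ∂μW
          ≤ ∫ _, exp (t ^ 2 / 2) ∂μW :=
            integral_mono hexp.integral_prod_left (integrable_const _) hinner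
        _ = exp (t ^ 2 / 2) := by simp
    have hlog : Real.log (∫ p, exp (f p) ∂P) ≤ t ^ 2 / 2 :=
      (Real.log_le_iff_le_exp (integral_exp_pos hexp)).2 hmgf
    rw [hEQ] at hDV
    have hllr : ∫ x, llr Q P x ∂Q = I := rfl
    rw [hllr] at hDV
    linarith
  have hMI : mutualInfo μ W V = I := rfl
  constructor
  · intro t ht
    rw [hMI, le_div_iff₀ ht]
    calc (∫ ω, g (W ω) (V ω) ∂μ) * t = t * ∫ ω, g (W ω) (V ω) ∂μ := mul_comm _ _
      _ ≤ I + t ^ 2 / 2 := hkey t ht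
  · rw [hMI]
    rcases eq_or_lt_of_le hI0 with h0 | hpos
    · have hs0 : Real.sqrt (2 * I) = 0 := by rw [← h0]; simp
      rw [hs0]
      by_contra hcon
      push_neg at hcon
      have hk := hkey _ hcon
      rw [← h0] at hk
      nlinarith
    · have ht : 0 < Real.sqrt (2 * I) := Real.sqrt_pos.2 (by linarith)
      have ht2 : Real.sqrt (2 * I) ^ 2 = 2 * I := Real.sq_sqrt (by linarith)
      have hk := hkey _ ht
      nlinarith [hk, ht2, ht]
end

section
/- Let ε ∈ {-1, +1} be a Rademacher random variable (uniform on {-1,+1}) and let L ∈ [0,1] be a random variable independent of ε. Fix constants C₁ > 1, C₃ > 0 satisfying e^{-2C₃C₁} + e^{2C₃} ≤ 2, and let ε̃ = ε - (C₁ - 1)/(C₁ + 1). Then E[exp(C₃(C₁+1) ε̃ L)] ≤ 1. -/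
open MeasureTheory ProbabilityTheory Real

theorem shifted_rademacher_mgf_le_one {Ω : Type*} [MeasureSpace Ω]
    [IsProbabilityMeasure (volume : Measure Ω)]
    (ε : Ω → ℝ) (hε : Measurable ε)
    (hεval : ∀ ω, ε ω = 1 ∨ ε ω = -1)
    (hεhalf : volume {ω | ε ω = 1} = 1 / 2)
    (L : Ω → ℝ) (hL : Measurable L)
    (hLbdd : ∀ ω, L ω ∈ Set.Icc (0 : ℝ) 1)
    (hindep : IndepFun ε L)
    (C₁ C₃ : ℝ) (hC₁ : 1 < C₁) (hC₃ : 0 < C₃)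
    (hcond : exp (-2 * C₃ * C₁) + exp (2 * C₃) ≤ 2) :
    ∫ ω, exp (C₃ * (C₁ + 1) * ((ε ω - (C₁ - 1) / (C₁ + 1)) * L ω)) ≤ 1 := by
  have hC₁pos : (0:ℝ) < C₁ + 1 := by linarith
  -- pointwise convexity bound: for l ∈ [0,1], exp(-2C₃C₁ l) + exp(2C₃ l) ≤ 2
  have key : ∀ l : ℝ, l ∈ Set.Icc (0:ℝ) 1 →
      exp (-2 * C₃ * C₁ * l) + exp (2 * C₃ * l) ≤ 2 := by
    intro l hl
    obtain ⟨hl0, hl1⟩ := hl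
    have h1 : exp (-2 * C₃ * C₁ * l) ≤ (1 - l) * exp 0 + l * exp (-2 * C₃ * C₁) := by
      have := convexOn_exp.2 (Set.mem_univ (0:ℝ)) (Set.mem_univ (-2 * C₃ * C₁))
        (by linarith : (0:ℝ) ≤ 1 - l) hl0 (by ring)
      simpa [smul_eq_mul, mul_comm] using this
    have h2 : exp (2 * C₃ * l) ≤ (1 - l) * exp 0 + l * exp (2 * C₃) := by
      have := convexOn_exp.2 (Set.mem_univ (0:ℝ)) (Set.mem_univ (2 * C₃))
        (by linarith : (0:ℝ) ≤ 1 - l) hl0 (by ring)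
      simpa [smul_eq_mul, mul_comm] using this
    have : (1 - l) * exp 0 + l * exp (-2 * C₃ * C₁) + ((1 - l) * exp 0 + l * exp (2 * C₃))
        = 2 * (1 - l) + l * (exp (-2 * C₃ * C₁) + exp (2 * C₃)) := by
      simp [Real.exp_zero]; ring
    nlinarith [exp_pos (-2 * C₃ * C₁), exp_pos (2 * C₃)]
  set A : Set Ω := {ω | ε ω = 1} with hA
  have hAmeas : MeasurableSet A := hε (measurableSet_singleton 1)
  -- rewrite the integrand
  have hrw : ∀ ω, exp (C₃ * (C₁ + 1) * ((ε ω - (C₁ - 1) / (C₁ + 1)) * L ω))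
      = A.indicator (1 : Ω → ℝ) ω * exp (2 * C₃ * L ω)
        + Aᶜ.indicator (1 : Ω → ℝ) ω * exp (-2 * C₃ * C₁ * L ω) := by
    intro ω
    rcases hεval ω with h | h
    · have hωA : ω ∈ A := h
      rw [Set.indicator_of_mem hωA, Set.indicator_of_notMem (by simpa using hωA)]
      have : C₃ * (C₁ + 1) * ((ε ω - (C₁ - 1) / (C₁ + 1)) * L ω) = 2 * C₃ * L ω := by
        rw [h]; field_simp; ring
      simp [this]
    · have hωA : ω ∉ A := by simp [hA, h]; intro hc; linarith
      rw [Set.indicator_of_notMem hωA, Set.indicator_of_mem (by simpa using hωA)]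
      have : C₃ * (C₁ + 1) * ((ε ω - (C₁ - 1) / (C₁ + 1)) * L ω) = -2 * C₃ * C₁ * L ω := by
        rw [h]; field_simp; ring
      simp [this]
  -- integrability
  have hφm : Measurable fun ω => exp (2 * C₃ * L ω) := (hL.const_mul _).exp
  have hψm : Measurable fun ω => exp (-2 * C₃ * C₁ * L ω) := (hL.const_mul _).exp
  have hφint : Integrable (fun ω => exp (2 * C₃ * L ω)) := by
    apply Integrable.mono' (integrable_const (exp (2 * C₃))) hφm.aestronglyMeasurable
    filter_upwards with ω
    rw [Real.norm_eq_abs, abs_of_pos (exp_pos _)]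
    exact exp_le_exp.2 (by nlinarith [(hLbdd ω).2, (hLbdd ω).1])
  have hψint : Integrable (fun ω => exp (-2 * C₃ * C₁ * L ω)) := by
    apply Integrable.mono' (integrable_const (1:ℝ)) hψm.aestronglyMeasurable
    filter_upwards with ω
    rw [Real.norm_eq_abs, abs_of_pos (exp_pos _)]
    calc exp (-2 * C₃ * C₁ * L ω) ≤ exp 0 := by
          apply exp_le_exp.2
          nlinarith [mul_nonneg (mul_pos hC₃ (by linarith : (0:ℝ) < C₁)).le (hLbdd ω).1]
      _ = 1 := Real.exp_zero
  have hindm : Measurable (A.indicator (1 : Ω → ℝ)) :=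
    measurable_const.indicator hAmeas
  have hindm' : Measurable (Aᶜ.indicator (1 : Ω → ℝ)) :=
    measurable_const.indicator hAmeas.compl
  have hindint : Integrable (A.indicator (1 : Ω → ℝ)) := by
    apply Integrable.mono' (integrable_const (1:ℝ)) hindm.aestronglyMeasurable
    filter_upwards with ω
    by_cases h : ω ∈ A <;> simp [h]
  have hindint' : Integrable (Aᶜ.indicator (1 : Ω → ℝ)) := by
    apply Integrable.mono' (integrable_const (1:ℝ)) hindm'.aestronglyMeasurable
    filter_upwards with ω
    by_cases h : ω ∈ Aᶜ <;> simp [h]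
  -- independence of composed functions
  have hind1 : IndepFun (A.indicator (1 : Ω → ℝ)) (fun ω => exp (2 * C₃ * L ω)) := by
    have : A.indicator (1 : Ω → ℝ) = (({1} : Set ℝ).indicator 1) ∘ ε := by
      funext ω; by_cases h : ε ω = 1 <;> simp [hA, h, Set.indicator]
    rw [this]
    exact hindep.comp (measurable_const.indicator (measurableSet_singleton 1))
      ((measurable_const_mul _).exp)
  have hind2 : IndepFun (Aᶜ.indicator (1 : Ω → ℝ)) (fun ω => exp (-2 * C₃ * C₁ * L ω)) := by
    have : Aᶜ.indicator (1 : Ω → ℝ) = ((({1} : Set ℝ)ᶜ).indicator 1) ∘ ε := by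
      funext ω; by_cases h : ε ω = 1 <;> simp [hA, h, Set.indicator]
    rw [this]
    exact hindep.comp (measurable_const.indicator (measurableSet_singleton 1).compl)
      ((measurable_const_mul _).exp)
  -- measures
  have hAc : volume Aᶜ = 1 / 2 := by
    rw [measure_compl hAmeas (measure_ne_top _ _), measure_univ, hεhalf]
    exact ENNReal.sub_eq_of_eq_add (by norm_num) (ENNReal.add_halves 1).symm
  have hintA : ∫ ω, A.indicator (1 : Ω → ℝ) ω = 1 / 2 := by
    rw [MeasureTheory.integral_indicator_one hAmeas, measureReal_def, hεhalf]
    simp [ENNReal.toReal_div]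
  have hintAc : ∫ ω, Aᶜ.indicator (1 : Ω → ℝ) ω = 1 / 2 := by
    rw [MeasureTheory.integral_indicator_one hAmeas.compl, measureReal_def, hAc]
    simp [ENNReal.toReal_div]
  -- integrability of products
  have hprod1 : Integrable (fun ω => A.indicator (1 : Ω → ℝ) ω * exp (2 * C₃ * L ω)) := by
    have : (fun ω => A.indicator (1 : Ω → ℝ) ω * exp (2 * C₃ * L ω))
        = A.indicator (fun ω => exp (2 * C₃ * L ω)) := by
      funext ω; by_cases h : ω ∈ A <;> simp [h]
    rw [this]; exact hφint.indicator hAmeas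
  have hprod2 : Integrable (fun ω => Aᶜ.indicator (1 : Ω → ℝ) ω * exp (-2 * C₃ * C₁ * L ω)) := by
    have : (fun ω => Aᶜ.indicator (1 : Ω → ℝ) ω * exp (-2 * C₃ * C₁ * L ω))
        = Aᶜ.indicator (fun ω => exp (-2 * C₃ * C₁ * L ω)) := by
      funext ω; by_cases h : ω ∈ Aᶜ <;> simp [h]
    rw [this]; exact hψint.indicator hAmeas.compl
  -- compute the integral
  have hmul1 : ∫ ω, A.indicator (1 : Ω → ℝ) ω * exp (2 * C₃ * L ω)
      = (1/2) * ∫ ω, exp (2 * C₃ * L ω) := by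
    have := hind1.integral_fun_mul_eq_mul_integral hindint.aestronglyMeasurable hφint.aestronglyMeasurable
    rw [← hintA]; exact this
  have hmul2 : ∫ ω, Aᶜ.indicator (1 : Ω → ℝ) ω * exp (-2 * C₃ * C₁ * L ω)
      = (1/2) * ∫ ω, exp (-2 * C₃ * C₁ * L ω) := by
    have := hind2.integral_fun_mul_eq_mul_integral hindint'.aestronglyMeasurable hψint.aestronglyMeasurable
    rw [← hintAc]; exact this
  calc ∫ ω, exp (C₃ * (C₁ + 1) * ((ε ω - (C₁ - 1) / (C₁ + 1)) * L ω))
      = ∫ ω, (A.indicator (1 : Ω → ℝ) ω * exp (2 * C₃ * L ω)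
          + Aᶜ.indicator (1 : Ω → ℝ) ω * exp (-2 * C₃ * C₁ * L ω)) := by
        exact integral_congr_ae (ae_of_all _ hrw)
    _ = ((1/2) * ∫ ω, exp (2 * C₃ * L ω)) + (1/2) * ∫ ω, exp (-2 * C₃ * C₁ * L ω) := by
        rw [integral_add hprod1 hprod2, hmul1, hmul2]
    _ = (1/2) * ∫ ω, (exp (2 * C₃ * L ω) + exp (-2 * C₃ * C₁ * L ω)) := by
        rw [integral_add hφint hψint, mul_add]
    _ ≤ (1/2) * 2 := by
        have : ∫ ω, (exp (2 * C₃ * L ω) + exp (-2 * C₃ * C₁ * L ω)) ≤ ∫ _ω : Ω, (2:ℝ) := by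
          apply integral_mono (hφint.add hψint) (integrable_const 2)
          intro ω
          have := key (L ω) (hLbdd ω)
          simpa [add_comm] using this
        have h2 : ∫ _ω : Ω, (2:ℝ) = 2 := by simp
        rw [h2] at this
        linarith
    _ = 1 := by norm_num
end

section
/- Let A be an ε-differentially private algorithm with input S taking finitely many values and output W, where S is a random dataset. Then I(W; S) ≤ ε. -/
open MeasureTheory ProbabilityTheory

/-- An ε-differentially private mechanism: for any two input datasets in the
support, the conditional output distributions are within a multiplicative
factor `e^ε` of each other. -/
def DiffPrivate {Ω 𝒮 𝒲 : Type*} [MeasurableSpace Ω] [MeasurableSpace 𝒮]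
    [MeasurableSpace 𝒲] (μ : Measure Ω) (S : Ω → 𝒮) (W : Ω → 𝒲) (ε : ℝ) : Prop :=
  ∀ s s' : 𝒮, μ (S ⁻¹' {s}) ≠ 0 → μ (S ⁻¹' {s'}) ≠ 0 →
    ∀ B : Set 𝒲, MeasurableSet B →
      (μ[|S ⁻¹' {s}]) (W ⁻¹' B) ≤ ENNReal.ofReal (Real.exp ε) * (μ[|S ⁻¹' {s'}]) (W ⁻¹' B)

/-- On a countable space with measurable singletons, a measure dominated on
singletons by `c • ν` is dominated everywhere. -/
lemma measure_le_smul_of_singleton_le {α : Type*} [Countable α] [MeasurableSpace α]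
    [MeasurableSingletonClass α] {μ ν : Measure α} {c : ENNReal}
    (h : ∀ x, μ {x} ≤ c * ν {x}) : μ ≤ c • ν := by
  rw [Measure.le_iff]
  intro t ht
  have h1 : ∀ (m : Measure α), m t = ∑' x : t, m {(x : α)} := by
    intro m
    have := tsum_measure_preimage_singleton (μ := m) (s := t) t.to_countable (f := id)
      (fun y _ => by simp)
    simpa using this.symm
  rw [h1 μ, Measure.smul_apply, smul_eq_mul, h1 ν, ← ENNReal.tsum_mul_left]
  exact ENNReal.tsum_le_tsum fun x => h x

theorem mutualInfo_le_of_dp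
    {Ω 𝒮 𝒲 : Type*} [MeasureSpace Ω]
    [IsProbabilityMeasure (volume : Measure Ω)]
    [Fintype 𝒮] [MeasurableSpace 𝒮] [MeasurableSingletonClass 𝒮]
    [Fintype 𝒲] [MeasurableSpace 𝒲] [MeasurableSingletonClass 𝒲]
    (S : Ω → 𝒮) (W : Ω → 𝒲) (hS : Measurable S) (hW : Measurable W)
    (ε : ℝ) (hε : 0 ≤ ε)
    (hdp : DiffPrivate volume S W ε) :
    mutualInfo volume W S ≤ ε := by
  set μ : Measure Ω := volume with hμ
  set c : ENNReal := ENNReal.ofReal (Real.exp ε) with hc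
  have hc0 : c ≠ 0 := by simp [hc, Real.exp_pos]
  have hctop : c ≠ ⊤ := ENNReal.ofReal_ne_top
  have hf : Measurable fun ω => (W ω, S ω) := hW.prodMk hS
  set Q : Measure (𝒲 × 𝒮) := μ.map fun ω => (W ω, S ω) with hQ
  set P : Measure (𝒲 × 𝒮) := (μ.map W).prod (μ.map S) with hP
  haveI : IsProbabilityMeasure Q := Measure.isProbabilityMeasure_map hf.aemeasurable
  haveI : IsProbabilityMeasure (μ.map W) := Measure.isProbabilityMeasure_map hW.aemeasurable
  haveI : IsProbabilityMeasure (μ.map S) := Measure.isProbabilityMeasure_map hS.aemeasurable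
  have hms : ∀ s' : 𝒮, MeasurableSet (S ⁻¹' {s'}) := fun s' => hS (measurableSet_singleton s')
  -- the key singleton bound
  have key : ∀ p : 𝒲 × 𝒮, Q {p} ≤ c * P {p} := by
    rintro ⟨w, s⟩
    have hQp : Q {(w, s)} = μ (W ⁻¹' {w} ∩ S ⁻¹' {s}) := by
      rw [hQ, Measure.map_apply hf (measurableSet_singleton _)]
      congr 1
      ext ω
      simp [Prod.ext_iff]
    have hPp : P {(w, s)} = μ (W ⁻¹' {w}) * μ (S ⁻¹' {s}) := by
      rw [hP, show ({(w, s)} : Set (𝒲 × 𝒮)) = {w} ×ˢ {s} by simp,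
        Measure.prod_prod, Measure.map_apply hW (measurableSet_singleton _),
        Measure.map_apply hS (measurableSet_singleton _)]
    rw [hQp, hPp]
    by_cases hs0 : μ (S ⁻¹' {s}) = 0
    · exact le_trans (le_trans (measure_mono Set.inter_subset_right) (le_of_eq hs0))
        zero_le
    -- conditional probability of the output
    set k : ENNReal := (μ[|S ⁻¹' {s}]) (W ⁻¹' {w}) with hk
    have hfin : ∀ s' : 𝒮, μ (S ⁻¹' {s'}) ≠ ⊤ := fun s' => measure_ne_top _ _
    have hmul : ∀ s' : 𝒮,
        μ (S ⁻¹' {s'} ∩ W ⁻¹' {w}) = μ (S ⁻¹' {s'}) * (μ[|S ⁻¹' {s'}]) (W ⁻¹' {w}) := by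
      intro s'
      rw [cond_apply (hms s')]
      by_cases h0 : μ (S ⁻¹' {s'}) = 0
      · have : μ (S ⁻¹' {s'} ∩ W ⁻¹' {w}) = 0 :=
          le_antisymm (le_trans (measure_mono Set.inter_subset_left) (le_of_eq h0)) zero_le
        simp [h0, this]
      · rw [← mul_assoc, ENNReal.mul_inv_cancel h0 (hfin s'), one_mul]
    have hdisj : Pairwise (Function.onFun Disjoint fun s' : 𝒮 => S ⁻¹' {s'} ∩ W ⁻¹' {w}) := by
      intro a b hab
      rw [Function.onFun, Set.disjoint_left]
      rintro ω ⟨ha, -⟩ ⟨hb, -⟩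
      exact hab (ha.symm.trans hb)
    have hpart : μ (W ⁻¹' {w}) = ∑ s' : 𝒮, μ (S ⁻¹' {s'} ∩ W ⁻¹' {w}) := by
      have hU : W ⁻¹' {w} = ⋃ s' : 𝒮, (S ⁻¹' {s'} ∩ W ⁻¹' {w}) := by
        ext ω; simp
      conv_lhs => rw [hU]
      rw [measure_iUnion hdisj fun s' => (hms s').inter (hW (measurableSet_singleton w)),
        tsum_fintype]
    have hone : (∑ s' : 𝒮, μ (S ⁻¹' {s'})) = 1 := by
      have hdisj' : Pairwise (Function.onFun Disjoint fun s' : 𝒮 => S ⁻¹' {s'}) := by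
        intro a b hab
        rw [Function.onFun, Set.disjoint_left]
        rintro ω ha hb
        exact hab ((Set.mem_singleton_iff.mp ha).symm.trans (Set.mem_singleton_iff.mp hb))
      have hU : (⋃ s' : 𝒮, S ⁻¹' {s'}) = Set.univ := by ext ω; simp
      rw [← tsum_fintype (L := SummationFilter.unconditional 𝒮), ← measure_iUnion hdisj' hms, hU, measure_univ]
    have hdpk : ∀ s' : 𝒮, μ (S ⁻¹' {s'}) ≠ 0 →
        c⁻¹ * k ≤ (μ[|S ⁻¹' {s'}]) (W ⁻¹' {w}) := by
      intro s' h0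
      have hb := hdp s s' hs0 h0 {w} (measurableSet_singleton w)
      calc c⁻¹ * k ≤ c⁻¹ * (c * (μ[|S ⁻¹' {s'}]) (W ⁻¹' {w})) := mul_le_mul_right hb _
        _ = (μ[|S ⁻¹' {s'}]) (W ⁻¹' {w}) := by
            rw [← mul_assoc, ENNReal.inv_mul_cancel hc0 hctop, one_mul]
    have hWlow : c⁻¹ * k ≤ μ (W ⁻¹' {w}) := by
      calc c⁻¹ * k = (∑ s' : 𝒮, μ (S ⁻¹' {s'})) * (c⁻¹ * k) := by rw [hone, one_mul]
        _ = ∑ s' : 𝒮, μ (S ⁻¹' {s'}) * (c⁻¹ * k) := Finset.sum_mul _ _ _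
        _ ≤ ∑ s' : 𝒮, μ (S ⁻¹' {s'} ∩ W ⁻¹' {w}) := by
            refine Finset.sum_le_sum fun s' _ => ?_
            by_cases h0 : μ (S ⁻¹' {s'}) = 0
            · simp [h0]
            · rw [hmul s']
              exact mul_le_mul_right (hdpk s' h0) _
        _ = μ (W ⁻¹' {w}) := hpart.symm
    have hkle : k ≤ c * μ (W ⁻¹' {w}) := by
      calc k = c * (c⁻¹ * k) := by rw [← mul_assoc, ENNReal.mul_inv_cancel hc0 hctop, one_mul]
        _ ≤ c * μ (W ⁻¹' {w}) := mul_le_mul_right hWlow _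
    calc μ (W ⁻¹' {w} ∩ S ⁻¹' {s}) = μ (S ⁻¹' {s} ∩ W ⁻¹' {w}) := by rw [Set.inter_comm]
      _ = μ (S ⁻¹' {s}) * k := hmul s
      _ ≤ μ (S ⁻¹' {s}) * (c * μ (W ⁻¹' {w})) := mul_le_mul_right hkle _
      _ = c * (μ (W ⁻¹' {w}) * μ (S ⁻¹' {s})) := by ring
  -- domination of measures
  have hQP : Q ≤ c • P := measure_le_smul_of_singleton_le key
  have QAC : Q ≪ P := Measure.absolutelyContinuous_of_le_smul hQP
  haveI : IsFiniteMeasure (c • P) := by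
    constructor
    rw [Measure.smul_apply, smul_eq_mul]
    exact ENNReal.mul_lt_top hctop.lt_top (measure_lt_top P _)
  -- Radon–Nikodym bound
  have h1 : Q.rnDeriv (c • P) ≤ᵐ[c • P] 1 := Measure.rnDeriv_le_one_of_le hQP
  have h1' : Q.rnDeriv (c • P) ≤ᵐ[P] 1 :=
    (Measure.absolutelyContinuous_smul hc0).ae_le h1
  have h2 : Q.rnDeriv (c • P) =ᵐ[P] c⁻¹ • Q.rnDeriv P :=
    Measure.rnDeriv_smul_right_of_ne_top Q P hc0 hctop
  have h3 : ∀ᵐ x ∂P, Q.rnDeriv P x ≤ c := by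
    filter_upwards [h1', h2] with x hx1 hx2
    have hcx : c⁻¹ * Q.rnDeriv P x ≤ 1 := by
      have : Q.rnDeriv (c • P) x = c⁻¹ * Q.rnDeriv P x := hx2
      rw [← this]; exact hx1
    calc Q.rnDeriv P x = c * (c⁻¹ * Q.rnDeriv P x) := by
          rw [← mul_assoc, ENNReal.mul_inv_cancel hc0 hctop, one_mul]
      _ ≤ c * 1 := mul_le_mul_right hcx _
      _ = c := mul_one c
  have h4 : ∀ᵐ x ∂Q, Q.rnDeriv P x ≤ c := QAC.ae_le h3
  -- pointwise log bound
  have h5 : ∀ᵐ x ∂Q, llr Q P x ≤ ε := by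
    filter_upwards [h4] with x hx
    have htr : (Q.rnDeriv P x).toReal ≤ Real.exp ε :=
      ENNReal.toReal_le_of_le_ofReal (Real.exp_pos ε).le hx
    rcases (ENNReal.toReal_nonneg : 0 ≤ (Q.rnDeriv P x).toReal).eq_or_lt with h | h
    · simp only [llr, ← h, Real.log_zero]
      exact hε
    · exact (Real.log_le_iff_le_exp h).mpr htr
  -- integrate
  show klDiv Q P ≤ ε
  unfold klDiv
  calc ∫ x, llr Q P x ∂Q ≤ ∫ _, ε ∂Q :=
        integral_mono_ae .of_finite (integrable_const ε) h5
    _ = ε := by simp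
end

section
/- Let A be an ε-differentially private algorithm (in the strong sense that dP(w|s) ≤ e^ε dP(w|s') for all pairs of datasets s, s' in the support). Then I(W; S) ≤ (e^ε − 1)ε. -/
open MeasureTheory ProbabilityTheory
open scoped ENNReal

lemma ratio_bound {ε r : ℝ} (hε : 0 ≤ ε) (h1 : Real.exp (-ε) ≤ r) (h2 : r ≤ Real.exp ε) :
    (r - 1) * Real.log r ≤ (Real.exp ε - 1) * ε := by
  have hr : 0 < r := lt_of_lt_of_le (Real.exp_pos _) h1
  rcases le_or_gt 1 r with h | h
  · have hlog : Real.log r ≤ ε := by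
      calc Real.log r ≤ Real.log (Real.exp ε) := Real.log_le_log hr h2
        _ = ε := Real.log_exp ε
    have hlog0 : 0 ≤ Real.log r := Real.log_nonneg h
    have : r - 1 ≤ Real.exp ε - 1 := by linarith
    exact mul_le_mul this hlog hlog0 (by linarith [Real.one_le_exp hε])
  · have hlog : -ε ≤ Real.log r := by
      calc -ε = Real.log (Real.exp (-ε)) := (Real.log_exp _).symm
        _ ≤ Real.log r := Real.log_le_log (Real.exp_pos _) h1
    have hlog0 : Real.log r ≤ 0 := Real.log_nonpos (le_of_lt hr) (le_of_lt h)
    have h1r : 1 - r ≤ Real.exp ε - 1 := by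
      have he : Real.exp (-ε) = (Real.exp ε)⁻¹ := Real.exp_neg ε
      have hep : 0 < Real.exp ε := Real.exp_pos ε
      have : Real.exp ε + (Real.exp ε)⁻¹ ≥ 2 := by
        rw [ge_iff_le, ← sub_nonneg]
        have h0 : 0 ≤ (Real.exp ε - 1)^2 / Real.exp ε := by positivity
        calc (0:ℝ) ≤ (Real.exp ε - 1)^2 / Real.exp ε := h0
          _ = Real.exp ε + (Real.exp ε)⁻¹ - 2 := by field_simp; ring
      linarith
    have heq : (r - 1) * Real.log r = (1 - r) * (-Real.log r) := by ring
    rw [heq]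
    exact mul_le_mul h1r (by linarith) (by linarith) (by linarith [Real.one_le_exp hε])

lemma key_sum {𝒲 : Type*} [Fintype 𝒲] (ε : ℝ) (hε : 0 ≤ ε) (q a : 𝒲 → ℝ)
    (hq : ∀ w, 0 ≤ q w) (ha : ∀ w, 0 ≤ a w)
    (hsq : ∑ w, q w = 1) (hsa : ∑ w, a w = 1)
    (hup : ∀ w, a w ≤ Real.exp ε * q w) (hlow : ∀ w, Real.exp (-ε) * q w ≤ a w) :
    ∑ w, q w * Real.log (q w / a w) ≤ (Real.exp ε - 1) * ε := by
  have hsupp : ∀ w, a w = 0 → q w = 0 := by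
    intro w h0
    have := hlow w
    rw [h0] at this
    have hqp := hq w
    nlinarith [Real.exp_pos (-ε)]
  have hsupp' : ∀ w, q w = 0 → a w = 0 := by
    intro w h0
    have := hup w
    rw [h0] at this
    have := ha w
    linarith [this, hup w]
  have step1 : ∑ w, q w * Real.log (q w / a w) ≤ ∑ w, (q w - a w) * Real.log (q w / a w) := by
    have : ∑ w, ((q w - a w) * Real.log (q w / a w) - q w * Real.log (q w / a w))
        ≥ ∑ w, (a w - q w) := by
      apply Finset.sum_le_sum
      intro w _
      have heq : (q w - a w) * Real.log (q w / a w) - q w * Real.log (q w / a w)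
          = -(a w * Real.log (q w / a w)) := by ring
      rw [heq]
      rcases eq_or_lt_of_le (ha w) with h0 | hap
      · rw [← h0]; simp [hsupp w h0.symm]
      · rcases eq_or_lt_of_le (hq w) with hq0 | hqp
        · exfalso; have := hsupp' w hq0.symm; linarith
        · have hrpos : 0 < q w / a w := by positivity
          have := Real.log_le_sub_one_of_pos hrpos
          have h2 : a w * Real.log (q w / a w) ≤ a w * (q w / a w - 1) :=
            mul_le_mul_of_nonneg_left this (le_of_lt hap)
          have h3 : a w * (q w / a w - 1) = q w - a w := by field_simp
          linarith
    have hsum0 : ∑ w, (a w - q w) = 0 := by rw [Finset.sum_sub_distrib, hsa, hsq]; ring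
    rw [Finset.sum_sub_distrib] at this
    linarith [hsum0 ▸ this]
  have step2 : ∑ w, (q w - a w) * Real.log (q w / a w) ≤ ∑ w, a w * ((Real.exp ε - 1) * ε) := by
    apply Finset.sum_le_sum
    intro w _
    rcases eq_or_lt_of_le (ha w) with h0 | hap
    · rw [← h0, hsupp w h0.symm]; simp
    · have hr1 : Real.exp (-ε) ≤ q w / a w := by
        rw [le_div_iff₀ hap]
        calc Real.exp (-ε) * a w ≤ Real.exp (-ε) * (Real.exp ε * q w) := by
              apply mul_le_mul_of_nonneg_left (hup w) (le_of_lt (Real.exp_pos _))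
          _ = q w := by rw [← mul_assoc, ← Real.exp_add]; simp
      have hr2 : q w / a w ≤ Real.exp ε := by
        rw [div_le_iff₀ hap]
        have h1 : q w ≤ Real.exp ε * a w := by
          calc q w = Real.exp ε * (Real.exp (-ε) * q w) := by
                rw [← mul_assoc, ← Real.exp_add]; simp
            _ ≤ Real.exp ε * a w := by
                apply mul_le_mul_of_nonneg_left (hlow w) (le_of_lt (Real.exp_pos _))
        linarith [h1]
      have hkey := ratio_bound hε hr1 hr2
      have heq : (q w - a w) * Real.log (q w / a w)
          = a w * ((q w / a w - 1) * Real.log (q w / a w)) := by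
        field_simp
      rw [heq]
      exact mul_le_mul_of_nonneg_left hkey (le_of_lt hap)
  calc ∑ w, q w * Real.log (q w / a w) ≤ ∑ w, (q w - a w) * Real.log (q w / a w) := step1
    _ ≤ ∑ w, a w * ((Real.exp ε - 1) * ε) := step2
    _ = (Real.exp ε - 1) * ε := by rw [← Finset.sum_mul, hsa, one_mul]

theorem mutualInfo_le_of_dp'
    {Ω 𝒮 𝒲 : Type*} [MeasureSpace Ω]
    [IsProbabilityMeasure (volume : Measure Ω)]
    [Fintype 𝒮] [MeasurableSpace 𝒮] [MeasurableSingletonClass 𝒮]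
    [Fintype 𝒲] [MeasurableSpace 𝒲] [MeasurableSingletonClass 𝒲]
    (S : Ω → 𝒮) (W : Ω → 𝒲) (hS : Measurable S) (hW : Measurable W)
    (ε : ℝ) (hε : 0 ≤ ε)
    (hdp : DiffPrivate volume S W ε) :
    mutualInfo volume W S ≤ (Real.exp ε - 1) * ε := by
  classical
  set μ : Measure Ω := volume with hμdef
  -- Step A: express mutual information as a finite sum
  have hEq : mutualInfo μ W S =
      ∑ w : 𝒲, ∑ s : 𝒮, (μ (W ⁻¹' {w} ∩ S ⁻¹' {s})).toReal *
        Real.log ((μ (W ⁻¹' {w} ∩ S ⁻¹' {s})).toReal /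
          ((μ (W ⁻¹' {w})).toReal * (μ (S ⁻¹' {s})).toReal)) := by
    have hWS : Measurable fun ω => (W ω, S ω) := hW.prodMk hS
    set ν : Measure (𝒲 × 𝒮) := μ.map (fun ω => (W ω, S ω)) with hνdef
    set π : Measure (𝒲 × 𝒮) := (μ.map W).prod (μ.map S) with hπdef
    have hνinst : IsProbabilityMeasure ν := Measure.isProbabilityMeasure_map hWS.aemeasurable
    have hWinst : IsProbabilityMeasure (μ.map W) := Measure.isProbabilityMeasure_map hW.aemeasurable
    have hSinst : IsProbabilityMeasure (μ.map S) := Measure.isProbabilityMeasure_map hS.aemeasurable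
    have hπinst : IsProbabilityMeasure π := by rw [hπdef]; infer_instance
    have hνx : ∀ x : 𝒲 × 𝒮, ν {x} = μ (W ⁻¹' {x.1} ∩ S ⁻¹' {x.2}) := by
      intro x
      rw [hνdef, Measure.map_apply hWS (measurableSet_singleton _)]
      congr 1; ext ω; simp [Prod.ext_iff]
    have hπx : ∀ x : 𝒲 × 𝒮, π {x} = μ (W ⁻¹' {x.1}) * μ (S ⁻¹' {x.2}) := by
      intro x
      rw [hπdef, ← Set.singleton_prod_singleton, Measure.prod_prod,
          Measure.map_apply hW (measurableSet_singleton _),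
          Measure.map_apply hS (measurableSet_singleton _)]
    set f : 𝒲 × 𝒮 → ℝ≥0∞ := fun x => ν {x} / π {x} with hfdef
    have hf_meas : Measurable f := measurable_of_countable f
    have hac : ∀ x : 𝒲 × 𝒮, π {x} = 0 → ν {x} = 0 := by
      intro x h0
      rw [hπx] at h0
      rw [hνx]
      rcases mul_eq_zero.mp h0 with h | h
      · exact le_antisymm (h ▸ measure_mono Set.inter_subset_left) zero_le
      · exact le_antisymm (h ▸ measure_mono Set.inter_subset_right) zero_le
    have hνd : ν = π.withDensity f := by
      apply MeasureTheory.Measure.ext_of_singleton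
      intro x
      rw [withDensity_apply _ (measurableSet_singleton _), lintegral_singleton]
      by_cases h0 : π {x} = 0
      · rw [h0, mul_zero, hac x h0]
      · rw [hfdef]
        exact (ENNReal.div_mul_cancel h0 (measure_ne_top _ _)).symm
    have hrn : ν.rnDeriv π =ᵐ[π] f := by
      have := Measure.rnDeriv_withDensity π hf_meas
      rwa [← hνd] at this
    have hacc : ν ≪ π := hνd ▸ withDensity_absolutelyContinuous π f
    have hrnν : ν.rnDeriv π =ᵐ[ν] f := hacc.ae_eq hrn
    have hI : mutualInfo μ W S = ∫ x, llr ν π x ∂ν := rfl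
    rw [hI]
    have h2 : ∫ x, llr ν π x ∂ν = ∫ x, Real.log ((f x).toReal) ∂ν := by
      apply integral_congr_ae
      filter_upwards [hrnν] with x hx
      unfold llr
      rw [hx]
    rw [h2, integral_fintype (Integrable.of_finite)]
    rw [Fintype.sum_prod_type]
    apply Finset.sum_congr rfl; intro w _
    apply Finset.sum_congr rfl; intro s _
    rw [smul_eq_mul, measureReal_def, hνx (w, s), hfdef]
    simp only
    rw [hνx (w, s), hπx (w, s), ENNReal.toReal_div, ENNReal.toReal_mul]
  -- real-valued notation
  set p : 𝒲 → 𝒮 → ℝ := fun w s => (μ (W ⁻¹' {w} ∩ S ⁻¹' {s})).toReal with hpdef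
  set a : 𝒲 → ℝ := fun w => (μ (W ⁻¹' {w})).toReal with hadef
  set b : 𝒮 → ℝ := fun s => (μ (S ⁻¹' {s})).toReal with hbdef
  have hp_nonneg : ∀ w s, 0 ≤ p w s := fun w s => ENNReal.toReal_nonneg
  have ha_nonneg : ∀ w, 0 ≤ a w := fun w => ENNReal.toReal_nonneg
  have hb_nonneg : ∀ s, 0 ≤ b s := fun s => ENNReal.toReal_nonneg
  -- marginal identities
  have hmargW : ∀ w, ∑ s, p w s = a w := by
    intro w
    have hu : W ⁻¹' {w} = ⋃ s : 𝒮, W ⁻¹' {w} ∩ S ⁻¹' {s} := by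
      ext ω; simp
    have hd : Pairwise (Function.onFun Disjoint fun s : 𝒮 => W ⁻¹' {w} ∩ S ⁻¹' {s}) := by
      intro s s' hss'
      apply Set.disjoint_left.mpr
      rintro ω ⟨-, h1⟩ ⟨-, h2⟩
      exact hss' (by simp at h1 h2; rw [← h1, ← h2])
    have hmeas : ∀ s : 𝒮, MeasurableSet (W ⁻¹' {w} ∩ S ⁻¹' {s}) :=
      fun s => (hW (measurableSet_singleton _)).inter (hS (measurableSet_singleton _))
    have : μ (W ⁻¹' {w}) = ∑ s : 𝒮, μ (W ⁻¹' {w} ∩ S ⁻¹' {s}) := by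
      conv_lhs => rw [hu]
      rw [measure_iUnion hd hmeas, tsum_fintype]
    rw [hadef]
    simp only
    rw [this, ENNReal.toReal_sum (fun s _ => measure_ne_top _ _)]
  have hmargS : ∀ s, ∑ w, p w s = b s := by
    intro s
    have hu : S ⁻¹' {s} = ⋃ w : 𝒲, W ⁻¹' {w} ∩ S ⁻¹' {s} := by
      ext ω; simp
    have hd : Pairwise (Function.onFun Disjoint fun w : 𝒲 => W ⁻¹' {w} ∩ S ⁻¹' {s}) := by
      intro w w' hww'
      apply Set.disjoint_left.mpr
      rintro ω ⟨h1, -⟩ ⟨h2, -⟩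
      exact hww' (by simp at h1 h2; rw [← h1, ← h2])
    have hmeas : ∀ w : 𝒲, MeasurableSet (W ⁻¹' {w} ∩ S ⁻¹' {s}) :=
      fun w => (hW (measurableSet_singleton _)).inter (hS (measurableSet_singleton _))
    have : μ (S ⁻¹' {s}) = ∑ w : 𝒲, μ (W ⁻¹' {w} ∩ S ⁻¹' {s}) := by
      conv_lhs => rw [hu]
      rw [measure_iUnion hd hmeas, tsum_fintype]
    rw [hbdef]
    simp only
    rw [this, ENNReal.toReal_sum (fun w _ => measure_ne_top _ _)]
  have hsum_b : ∑ s, b s = 1 := by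
    have hu : (Set.univ : Set Ω) = ⋃ s : 𝒮, S ⁻¹' {s} := by ext ω; simp
    have hd : Pairwise (Function.onFun Disjoint fun s : 𝒮 => S ⁻¹' {s}) := by
      intro s s' hss'
      apply Set.disjoint_left.mpr
      intro ω h1 h2
      exact hss' (by simp at h1 h2; rw [← h1, ← h2])
    have : (1 : ℝ≥0∞) = ∑ s : 𝒮, μ (S ⁻¹' {s}) := by
      rw [← measure_univ (μ := μ), hu, measure_iUnion hd
        (fun s => hS (measurableSet_singleton _)), tsum_fintype]
    have h2 : ((1 : ℝ≥0∞)).toReal = ∑ s : 𝒮, b s := by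
      rw [this, ENNReal.toReal_sum (fun s _ => measure_ne_top _ _)]
    simpa using h2.symm
  have hsum_a : ∑ w, a w = 1 := by
    have hu : (Set.univ : Set Ω) = ⋃ w : 𝒲, W ⁻¹' {w} := by ext ω; simp
    have hd : Pairwise (Function.onFun Disjoint fun w : 𝒲 => W ⁻¹' {w}) := by
      intro w w' hww'
      apply Set.disjoint_left.mpr
      intro ω h1 h2
      exact hww' (by simp at h1 h2; rw [← h1, ← h2])
    have : (1 : ℝ≥0∞) = ∑ w : 𝒲, μ (W ⁻¹' {w}) := by
      rw [← measure_univ (μ := μ), hu, measure_iUnion hd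
        (fun w => hW (measurableSet_singleton _)), tsum_fintype]
    have h2 : ((1 : ℝ≥0∞)).toReal = ∑ w : 𝒲, a w := by
      rw [this, ENNReal.toReal_sum (fun w _ => measure_ne_top _ _)]
    simpa using h2.symm
  -- DP in real form
  have hdpr : ∀ s s' : 𝒮, μ (S ⁻¹' {s}) ≠ 0 → μ (S ⁻¹' {s'}) ≠ 0 → ∀ w : 𝒲,
      p w s / b s ≤ Real.exp ε * (p w s' / b s') := by
    intro s s' hs hs' w
    have h := hdp s s' hs hs' {w} (measurableSet_singleton w)
    rw [cond_apply (hS (measurableSet_singleton s)) μ,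
        cond_apply (hS (measurableSet_singleton s')) μ] at h
    have hRHS_net : ENNReal.ofReal (Real.exp ε) *
        ((μ (S ⁻¹' {s'}))⁻¹ * μ (S ⁻¹' {s'} ∩ W ⁻¹' {w})) ≠ ⊤ := by
      apply ENNReal.mul_ne_top ENNReal.ofReal_ne_top
      exact ENNReal.mul_ne_top (ENNReal.inv_ne_top.mpr hs') (measure_ne_top _ _)
    have h2 := ENNReal.toReal_mono hRHS_net h
    rw [ENNReal.toReal_mul, ENNReal.toReal_mul, ENNReal.toReal_mul,
        ENNReal.toReal_inv, ENNReal.toReal_inv,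
        ENNReal.toReal_ofReal (le_of_lt (Real.exp_pos ε))] at h2
    rw [hpdef, hbdef]
    simp only
    rw [Set.inter_comm (W ⁻¹' {w}) (S ⁻¹' {s}), Set.inter_comm (W ⁻¹' {w}) (S ⁻¹' {s'})]
    calc (μ (S ⁻¹' {s} ∩ W ⁻¹' {w})).toReal / (μ (S ⁻¹' {s})).toReal
        = (μ (S ⁻¹' {s})).toReal⁻¹ * (μ (S ⁻¹' {s} ∩ W ⁻¹' {w})).toReal := by
          rw [div_eq_inv_mul]
      _ ≤ Real.exp ε * ((μ (S ⁻¹' {s'})).toReal⁻¹ * (μ (S ⁻¹' {s'} ∩ W ⁻¹' {w})).toReal) := h2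
      _ = Real.exp ε * ((μ (S ⁻¹' {s'} ∩ W ⁻¹' {w})).toReal / (μ (S ⁻¹' {s'})).toReal) := by
          rw [div_eq_inv_mul]
  -- p vanishes on null datasets
  have hp_zero : ∀ (w : 𝒲) (s : 𝒮), μ (S ⁻¹' {s}) = 0 → p w s = 0 := by
    intro w s h0
    have : μ (W ⁻¹' {w} ∩ S ⁻¹' {s}) = 0 :=
      le_antisymm (h0 ▸ measure_mono Set.inter_subset_right) zero_le
    rw [hpdef]; simp only [this, ENNReal.toReal_zero]
  -- per-dataset bound
  have per_s : ∀ s : 𝒮,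
      ∑ w, p w s * Real.log (p w s / (a w * b s)) ≤ b s * ((Real.exp ε - 1) * ε) := by
    intro s
    by_cases hbs0 : μ (S ⁻¹' {s}) = 0
    · have hb0 : b s = 0 := by rw [hbdef]; simp [hbs0]
      have : ∑ w, p w s * Real.log (p w s / (a w * b s)) = 0 := by
        apply Finset.sum_eq_zero
        intro w _
        rw [hp_zero w s hbs0, zero_mul]
      rw [this, hb0, zero_mul]
    · have hbpos : 0 < b s := ENNReal.toReal_pos hbs0 (measure_ne_top _ _)
      set q : 𝒲 → ℝ := fun w => p w s / b s with hqdef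
      have hq_nonneg : ∀ w, 0 ≤ q w := fun w => div_nonneg (hp_nonneg w s) (le_of_lt hbpos)
      have hsq : ∑ w, q w = 1 := by
        rw [hqdef]
        simp only
        rw [← Finset.sum_div, hmargS s, div_self (ne_of_gt hbpos)]
      have hup : ∀ w, a w ≤ Real.exp ε * q w := by
        intro w
        rw [← hmargW w]
        calc ∑ s', p w s' ≤ ∑ s', b s' * (Real.exp ε * q w) := by
              apply Finset.sum_le_sum
              intro s' _
              by_cases hb' : μ (S ⁻¹' {s'}) = 0
              · rw [hp_zero w s' hb']
                have : b s' = 0 := by rw [hbdef]; simp [hb']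
                rw [this, zero_mul]
              · have hb'pos : 0 < b s' := ENNReal.toReal_pos hb' (measure_ne_top _ _)
                have h := hdpr s' s hb' hbs0 w
                have : p w s' = (p w s' / b s') * b s' :=
                  (div_mul_cancel₀ _ (ne_of_gt hb'pos)).symm
                rw [this]
                calc (p w s' / b s') * b s' ≤ (Real.exp ε * (p w s / b s)) * b s' :=
                      mul_le_mul_of_nonneg_right h (le_of_lt hb'pos)
                  _ = b s' * (Real.exp ε * q w) := by rw [hqdef]; ring
          _ = Real.exp ε * q w := by rw [← Finset.sum_mul, hsum_b, one_mul]
      have hlow : ∀ w, Real.exp (-ε) * q w ≤ a w := by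
        intro w
        rw [← hmargW w]
        calc Real.exp (-ε) * q w = ∑ s', b s' * (Real.exp (-ε) * q w) := by
              rw [← Finset.sum_mul, hsum_b, one_mul]
          _ ≤ ∑ s', p w s' := by
              apply Finset.sum_le_sum
              intro s' _
              by_cases hb' : μ (S ⁻¹' {s'}) = 0
              · have hb0 : b s' = 0 := by rw [hbdef]; simp [hb']
                rw [hb0, zero_mul]
                exact hp_nonneg w s'
              · have hb'pos : 0 < b s' := ENNReal.toReal_pos hb' (measure_ne_top _ _)
                have h := hdpr s s' hbs0 hb' w
                have h2 : Real.exp (-ε) * q w ≤ p w s' / b s' := by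
                  have h3 := mul_le_mul_of_nonneg_left h (le_of_lt (Real.exp_pos (-ε)))
                  rw [← mul_assoc, ← Real.exp_add] at h3
                  simpa [hqdef] using h3
                calc b s' * (Real.exp (-ε) * q w) ≤ b s' * (p w s' / b s') :=
                      mul_le_mul_of_nonneg_left h2 (le_of_lt hb'pos)
                  _ = p w s' := mul_div_cancel₀ _ (ne_of_gt hb'pos)
      have hkey := key_sum ε hε q a hq_nonneg ha_nonneg hsq hsum_a hup hlow
      have hterm : ∀ w, p w s * Real.log (p w s / (a w * b s))
          = b s * (q w * Real.log (q w / a w)) := by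
        intro w
        have h1 : p w s = q w * b s := (div_mul_cancel₀ _ (ne_of_gt hbpos)).symm
        have h2 : q w / a w = p w s / (a w * b s) := by
          rw [hqdef]
          simp only
          rw [div_div]
          ring_nf
        rw [← h2, h1]
        ring
      calc ∑ w, p w s * Real.log (p w s / (a w * b s))
          = ∑ w, b s * (q w * Real.log (q w / a w)) := by
            exact Finset.sum_congr rfl (fun w _ => hterm w)
        _ = b s * ∑ w, q w * Real.log (q w / a w) := by rw [Finset.mul_sum]
        _ ≤ b s * ((Real.exp ε - 1) * ε) :=
            mul_le_mul_of_nonneg_left hkey (le_of_lt hbpos)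
  -- conclude
  rw [hEq, Finset.sum_comm]
  calc ∑ s : 𝒮, ∑ w : 𝒲, p w s * Real.log (p w s / (a w * b s))
      ≤ ∑ s : 𝒮, b s * ((Real.exp ε - 1) * ε) := Finset.sum_le_sum (fun s _ => per_s s)
    _ = (Real.exp ε - 1) * ε := by rw [← Finset.sum_mul, hsum_b, one_mul]
end
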